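/- For every positive integer n, every c > 0, and every α ∈ (1 − 1/n, 1 + 1/n), the SIGTRON function s_{α,c} is n times continuously differentiable on all of ℝ; moreover, when α ≠ 1, its n-th derivative vanishes at every point outside dom(σ_{α,c}) (i.e., at every x > −c_α when α < 1, and at every x < −c_α when α > 1). -/

import Mathlib

/-- `c_α = c^{1−α}/(α−1)` (real power). -/
noncomputable def cA (α c : ℝ) : ℝ := c ^ (1 - α) / (α - 1)

/-- SIGTRON: extended asymmetric sigmoid with Perceptron. -/
noncomputable def sigtron (α c : ℝ) (x : ℝ) : ℝ :=
  if α = 1 then 1 / (1 + Real.exp (-x))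
  else if α < 1 then
    if x ≤ -(cA α c) then 1 / (1 + (1 + x / cA α c) ^ ((1 : ℝ) / (1 - α))) else 1
  else
    if -(cA α c) < x then 1 / (1 + (1 + x / cA α c) ^ ((1 : ℝ) / (1 - α))) else 0



open Real Filter Topology

noncomputable def psi (q : ℝ) (x : ℝ) : ℝ := if 0 < x then x ^ q else 0

lemma psi_nonneg (q x : ℝ) : 0 ≤ psi q x := by
  unfold psi; split
  · exact (Real.rpow_pos_of_pos ‹_› q).le
  · exact le_rfl

lemma psi_continuous {q : ℝ} (hq : 0 < q) : Continuous (psi q) := by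
  have : psi q = fun x => (max x 0) ^ q := by
    funext x; unfold psi; split
    · rw [max_eq_left (le_of_lt ‹_›)]
    · rw [max_eq_right (not_lt.1 ‹_›), Real.zero_rpow hq.ne']
  rw [this]
  exact (continuous_id.max continuous_const).rpow_const fun x => Or.inr hq.le

lemma psi_hasDerivAt {q : ℝ} (hq : 1 < q) (x : ℝ) :
    HasDerivAt (psi q) (q * psi (q - 1) x) x := by
  rcases lt_trichotomy x 0 with hx | hx | hx
  · have h0 : psi (q - 1) x = 0 := if_neg (not_lt.2 hx.le)
    rw [h0, mul_zero]
    have he : (fun _ : ℝ => (0 : ℝ)) =ᶠ[𝓝 x] psi q := by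
      filter_upwards [Iio_mem_nhds hx] with y hy
      exact (if_neg (not_lt.2 (le_of_lt hy))).symm
    exact (hasDerivAt_const x 0).congr_of_eventuallyEq he.symm
  · subst hx
    have h0 : psi (q - 1) 0 = 0 := if_neg (lt_irrefl 0)
    rw [h0, mul_zero]
    rw [hasDerivAt_iff_tendsto_slope]
    have he : slope (psi q) 0 =ᶠ[𝓝[≠] (0:ℝ)] psi (q - 1) := by
      filter_upwards [self_mem_nhdsWithin] with y hy
      have h00 : psi q 0 = 0 := if_neg (lt_irrefl 0)
      rw [slope_def_field, h00, sub_zero, sub_zero]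
      unfold psi
      rcases lt_or_ge 0 y with h | h
      · rw [if_pos h, if_pos h, Real.rpow_sub h, Real.rpow_one]
      · rw [if_neg (not_lt.2 h), if_neg (not_lt.2 h), zero_div]
    rw [Filter.tendsto_congr' he]
    have hc := (psi_continuous (by linarith : (0:ℝ) < q - 1)).continuousAt (x := (0:ℝ))
    have h0' : psi (q - 1) 0 = 0 := if_neg (lt_irrefl 0)
    rw [ContinuousAt, h0'] at hc
    exact hc.mono_left nhdsWithin_le_nhds
  · have he : (fun y : ℝ => y ^ q) =ᶠ[𝓝 x] psi q := by
      filter_upwards [Ioi_mem_nhds hx] with y hy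
      exact (if_pos hy).symm
    have h := Real.hasDerivAt_rpow_const (p := q) (Or.inl hx.ne')
    have h2 : q * x ^ (q - 1) = q * psi (q - 1) x := by rw [psi, if_pos hx]
    rw [h2] at h
    exact h.congr_of_eventuallyEq he.symm

lemma psi_contDiff : ∀ (n : ℕ) {q : ℝ}, (n : ℝ) < q → ContDiff ℝ (n : ℕ∞) (psi q) := by
  intro n
  induction n with
  | zero => intro q hq; exact contDiff_zero.2 (psi_continuous (by exact_mod_cast hq))
  | succ n ih =>
    intro q hq
    have hq1 : 1 < q := by
      have h0 : (0 : ℝ) ≤ (n : ℝ) := Nat.cast_nonneg n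
      push_cast at hq
      linarith
    have hd : ∀ x, HasDerivAt (psi q) (q * psi (q - 1) x) x := psi_hasDerivAt hq1
    have hdiff : Differentiable ℝ (psi q) := fun x => (hd x).differentiableAt
    have hderiv : deriv (psi q) = fun x => q * psi (q - 1) x := funext fun x => (hd x).deriv
    have hih : ContDiff ℝ (n : ℕ∞) (psi (q - 1)) := ih (by push_cast at hq ⊢; linarith)
    have hder : ContDiff ℝ (n : ℕ∞) (deriv (psi q)) := by
      rw [hderiv]; exact contDiff_const.mul hih
    have : ContDiff ℝ ((n : ℕ∞) + 1) (psi q) :=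
      contDiff_succ_iff_deriv.2 ⟨hdiff, fun h => by simp at h, hder⟩
    convert this using 2
    norm_cast

lemma iteratedDeriv_const'' {n : ℕ} (hn : n ≠ 0) (c : ℝ) (x : ℝ) :
    iteratedDeriv n (fun _ : ℝ => c) x = 0 := by
  rw [iteratedDeriv_eq_iteratedFDeriv, iteratedFDeriv_const_of_ne hn]
  simp


/-- For every positive integer `n`, `c > 0` and
`α ∈ (1 − 1/n, 1 + 1/n)`, SIGTRON is `n` times continuously differentiable on `ℝ`;
moreover when `α ≠ 1` its `n`-th derivative vanishes outside `dom(σ_{α,c})`, i.e.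
at every `x > −c_α` when `α < 1` and at every `x < −c_α` when `α > 1`. -/
theorem sigtron_stmt8 (n : ℕ) (hn : 1 ≤ n) (c : ℝ) (hc : 0 < c) (α : ℝ)
    (hα : α ∈ Set.Ioo (1 - 1 / (n : ℝ)) (1 + 1 / (n : ℝ))) :
    ContDiff ℝ (n : ℕ∞) (sigtron α c) ∧
    (α ≠ 1 →
      (α < 1 → ∀ x, -(cA α c) < x → iteratedDeriv n (sigtron α c) x = 0) ∧
      (1 < α → ∀ x, x < -(cA α c) → iteratedDeriv n (sigtron α c) x = 0)) := by
  obtain ⟨hα1, hα2⟩ := hα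
  have hn0 : (0 : ℝ) < (n : ℝ) := by exact_mod_cast hn
  by_cases h1 : α = 1
  · subst h1
    constructor
    · have hfun : sigtron 1 c = fun x => 1 / (1 + Real.exp (-x)) := by
        funext x; unfold sigtron; rw [if_pos rfl]
      rw [hfun]
      have hden : ∀ x : ℝ, 1 + Real.exp (-x) ≠ 0 := fun x => by positivity
      exact (contDiff_const.div
        (contDiff_const.add (Real.contDiff_exp.comp contDiff_neg)) hden).of_le le_top
    · intro h; exact absurd rfl h
  · rcases lt_or_gt_of_ne h1 with hlt | hgt
    · -- α < 1
      have ha : cA α c < 0 :=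
        div_neg_of_pos_of_neg (Real.rpow_pos_of_pos hc _) (by linarith)
      have h1α : 0 < 1 - α := by linarith
      have hp : (n : ℝ) < 1 / (1 - α) := by
        rw [lt_div_iff₀ h1α]
        have h2 : 1 - α < 1 / (n : ℝ) := by linarith
        calc (n : ℝ) * (1 - α) < (n : ℝ) * (1 / (n : ℝ)) :=
              mul_lt_mul_of_pos_left h2 hn0
          _ = 1 := mul_one_div_cancel hn0.ne'
      have ha0 : cA α c ≠ 0 := ha.ne
      have key : ∀ x, 0 ≤ 1 + x / cA α c ↔ x ≤ -(cA α c) := by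
        intro x
        rw [show 1 + x / cA α c = (cA α c + x) / cA α c by field_simp]
        constructor
        · intro h
          by_contra hcon
          push_neg at hcon
          have := div_neg_of_pos_of_neg (by linarith : 0 < cA α c + x) ha
          linarith
        · intro h
          exact div_nonneg_iff.2 (Or.inr ⟨by linarith, ha.le⟩)
      have hfun : sigtron α c =
          fun x => 1 / (1 + psi (1 / (1 - α)) (1 + x / cA α c)) := by
        funext x
        unfold sigtron
        rw [if_neg h1, if_pos hlt]
        by_cases hx : x ≤ -(cA α c)
        · rw [if_pos hx]
          have ht : 0 ≤ 1 + x / cA α c := (key x).2 hx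
          rcases eq_or_lt_of_le ht with heq | hpos
          · rw [← heq, Real.zero_rpow (one_div_ne_zero h1α.ne'), psi,
              if_neg (lt_irrefl 0)]
          · rw [psi, if_pos hpos]
        · rw [if_neg hx]
          push_neg at hx
          have ht : ¬ 0 < 1 + x / cA α c := fun h => absurd ((key x).1 h.le) (not_le.2 hx)
          rw [psi, if_neg ht]
          norm_num
      constructor
      · rw [hfun]
        have hden : ∀ x : ℝ, 1 + psi (1 / (1 - α)) (1 + x / cA α c) ≠ 0 := fun x => by
          have := psi_nonneg (1 / (1 - α)) (1 + x / cA α c)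
          intro h; linarith
        exact contDiff_const.div
          (contDiff_const.add ((psi_contDiff n hp).comp
            (contDiff_const.add (contDiff_id.div_const _)))) hden
      · intro _
        refine ⟨fun _ x hx => ?_, fun h => absurd h (not_lt.2 hlt.le)⟩
        have he : sigtron α c =ᶠ[𝓝 x] fun _ => (1 : ℝ) := by
          filter_upwards [Ioi_mem_nhds hx] with y hy
          unfold sigtron
          rw [if_neg h1, if_pos hlt, if_neg (not_le.2 hy)]
        rw [he.iteratedDeriv_eq n, iteratedDeriv_const'' (by omega) 1 x]
    · -- 1 < α
      have ha : 0 < cA α c :=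
        div_pos (Real.rpow_pos_of_pos hc _) (by linarith)
      have hα1' : 0 < α - 1 := by linarith
      have hq : (n : ℝ) < 1 / (α - 1) := by
        rw [lt_div_iff₀ hα1']
        have h2 : α - 1 < 1 / (n : ℝ) := by linarith
        calc (n : ℝ) * (α - 1) < (n : ℝ) * (1 / (n : ℝ)) :=
              mul_lt_mul_of_pos_left h2 hn0
          _ = 1 := mul_one_div_cancel hn0.ne'
      have hpq : (1 : ℝ) / (1 - α) = -(1 / (α - 1)) := by
        rw [show (1 : ℝ) - α = -(α - 1) by ring, div_neg]
      have key : ∀ x, 0 < 1 + x / cA α c ↔ -(cA α c) < x := by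
        intro x
        rw [show 1 + x / cA α c = (cA α c + x) / cA α c by field_simp]
        constructor
        · intro h
          rcases div_pos_iff.1 h with ⟨h2, _⟩ | ⟨_, h3⟩
          · linarith
          · linarith
        · intro h
          exact div_pos (by linarith) ha
      have hfun : sigtron α c = fun x =>
          psi (1 / (α - 1)) (1 + x / cA α c) /
            (1 + psi (1 / (α - 1)) (1 + x / cA α c)) := by
        funext x
        unfold sigtron
        rw [if_neg h1, if_neg (not_lt.2 hgt.le)]
        by_cases hx : -(cA α c) < x
        · rw [if_pos hx]
          have ht : 0 < 1 + x / cA α c := (key x).2 hx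
          rw [psi, if_pos ht, hpq, Real.rpow_neg ht.le]
          have hT : 0 < (1 + x / cA α c) ^ (1 / (α - 1)) :=
            Real.rpow_pos_of_pos ht _
          generalize hTdef : (1 + x / cA α c) ^ (1 / (α - 1)) = T at hT ⊢
          rw [eq_div_iff (by linarith)]
          field_simp
          ring
        · rw [if_neg hx]
          have ht : ¬ 0 < 1 + x / cA α c := fun h => hx ((key x).1 h)
          rw [psi, if_neg ht]
          norm_num
      constructor
      · rw [hfun]
        have hden : ∀ x : ℝ, 1 + psi (1 / (α - 1)) (1 + x / cA α c) ≠ 0 := fun x => by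
          have := psi_nonneg (1 / (α - 1)) (1 + x / cA α c)
          intro h; linarith
        exact ContDiff.div
          ((psi_contDiff n hq).comp (contDiff_const.add (contDiff_id.div_const _)))
          (contDiff_const.add ((psi_contDiff n hq).comp
            (contDiff_const.add (contDiff_id.div_const _)))) hden
      · intro _
        refine ⟨fun h => absurd h (not_lt.2 hgt.le), fun _ x hx => ?_⟩
        have he : sigtron α c =ᶠ[𝓝 x] fun _ => (0 : ℝ) := by
          filter_upwards [Iio_mem_nhds hx] with y hy
          unfold sigtron
          rw [if_neg h1, if_neg (not_lt.2 hgt.le), if_neg (not_lt.2 hy.le)]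
        rw [he.iteratedDeriv_eq n, iteratedDeriv_const'' (by omega) 0 x]
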